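/- Let n ≥ 2. The negative continued fraction [-2, -2, -2, -2, -3, -2, ..., -2], consisting of four entries -2, then one entry -3, then (n-2) entries -2, equals -(6n-1)/(5n-1). -/

import Mathlib

def ncf : List ℤ → ℚ
  | [] => 0
  | [a] => (a : ℚ)
  | a :: b :: l => (a : ℚ) - (ncf (b :: l))⁻¹

lemma ncf_rep : ∀ m : ℕ, ncf (List.replicate (m + 1) (-2)) = -((m : ℚ) + 2) / ((m : ℚ) + 1)
  | 0 => by norm_num [ncf]
  | (m + 1) => by
    have ih := ncf_rep m
    have h1 : ((m : ℚ) + 1) ≠ 0 := by positivity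
    have h2 : ((m : ℚ) + 2) ≠ 0 := by positivity
    have h4 : ((m : ℚ) + 1 + 1) ≠ 0 := by positivity
    rw [List.replicate_succ, List.replicate_succ]
    rw [show ncf (-2 :: -2 :: List.replicate m (-2)) =
        (-2 : ℚ) - (ncf (-2 :: List.replicate m (-2)))⁻¹ from rfl]
    rw [← List.replicate_succ, ih]
    push_cast
    rw [inv_div, div_neg, sub_neg_eq_add, eq_div_iff h4]
    field_simp
    ring

lemma ncf_three : ∀ m : ℕ, ncf (-3 :: List.replicate m (-2)) = -(2 * (m : ℚ) + 3) / ((m : ℚ) + 1)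
  | 0 => by norm_num [ncf]
  | (m + 1) => by
    have h1 : ((m : ℚ) + 1) ≠ 0 := by positivity
    have h2 : ((m : ℚ) + 2) ≠ 0 := by positivity
    have h4 : ((m : ℚ) + 1 + 1) ≠ 0 := by positivity
    rw [List.replicate_succ]
    rw [show ncf (-3 :: -2 :: List.replicate m (-2)) =
        (-3 : ℚ) - (ncf (-2 :: List.replicate m (-2)))⁻¹ from rfl]
    rw [← List.replicate_succ, ncf_rep m]
    push_cast
    rw [inv_div, div_neg, sub_neg_eq_add, eq_div_iff h4]
    field_simp
    ring

theorem stmt_13 (n : ℕ) (hn : 2 ≤ n) :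
    ncf (List.replicate 4 (-2) ++ [-3] ++ List.replicate (n - 2) (-2)) =
      -((6 * (n : ℚ) - 1) / (5 * (n : ℚ) - 1)) := by
  have hc : ((n - 2 : ℕ) : ℚ) = (n : ℚ) - 2 := by
    push_cast [Nat.cast_sub hn]; ring
  have hn2 : (2 : ℚ) ≤ (n : ℚ) := by exact_mod_cast hn
  have hA : (n : ℚ) - 1 ≠ 0 := by nlinarith
  have hB : 2 * (n : ℚ) - 1 ≠ 0 := by nlinarith
  have hC : 3 * (n : ℚ) - 1 ≠ 0 := by nlinarith
  have hD : 4 * (n : ℚ) - 1 ≠ 0 := by nlinarith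
  have hE : 5 * (n : ℚ) - 1 ≠ 0 := by nlinarith
  have hlist : List.replicate 4 (-2 : ℤ) ++ [-3] ++ List.replicate (n - 2) (-2) =
      -2 :: -2 :: -2 :: -2 :: -3 :: List.replicate (n - 2) (-2) := by
    simp [List.replicate]
  rw [hlist]
  rw [show ncf (-2 :: -2 :: -2 :: -2 :: -3 :: List.replicate (n - 2) (-2)) =
      (-2 : ℚ) - ((-2 : ℚ) - ((-2 : ℚ) - ((-2 : ℚ) -
        (ncf (-3 :: List.replicate (n - 2) (-2)))⁻¹)⁻¹)⁻¹)⁻¹ from rfl]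
  rw [ncf_three (n - 2), hc]
  have e1 : -(2 * ((n : ℚ) - 2) + 3) / ((n : ℚ) - 2 + 1) = -(2 * (n : ℚ) - 1) / ((n : ℚ) - 1) := by
    ring_nf
  rw [e1]
  have s1 : (-2 : ℚ) - (-(2 * (n : ℚ) - 1) / ((n : ℚ) - 1))⁻¹ =
      -(3 * (n : ℚ) - 1) / (2 * (n : ℚ) - 1) := by
    rw [inv_div, div_neg, sub_neg_eq_add, eq_div_iff hB]; field_simp; ring
  rw [s1]
  have s2 : (-2 : ℚ) - (-(3 * (n : ℚ) - 1) / (2 * (n : ℚ) - 1))⁻¹ =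
      -(4 * (n : ℚ) - 1) / (3 * (n : ℚ) - 1) := by
    rw [inv_div, div_neg, sub_neg_eq_add, eq_div_iff hC, add_mul, div_mul_cancel₀ _ hC]; ring
  rw [s2]
  have s3 : (-2 : ℚ) - (-(4 * (n : ℚ) - 1) / (3 * (n : ℚ) - 1))⁻¹ =
      -(5 * (n : ℚ) - 1) / (4 * (n : ℚ) - 1) := by
    rw [inv_div, div_neg, sub_neg_eq_add, eq_div_iff hD, add_mul, div_mul_cancel₀ _ hD]; ring
  rw [s3]
  rw [inv_div, div_neg, sub_neg_eq_add, ← neg_div, eq_div_iff hE, add_mul, div_mul_cancel₀ _ hE]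
  ring
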